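/- Let p ≥ 2 be real, b > 0, D > 0. With σ(h,2) = D(1 + (p^b − 1)/((p−1)(p^b + p^{hb}))) and σ(max) = D(p^{b+2} − 1)/(p^b(p^2 − 1)), the limit of σ(h,2) as h → 1⁻ equals D(1 + (p^b − 1)/(2p^b(p−1))), and lim_{h→1⁻} σ(h,2) − σ(max) = D(p^b − 1)/(2p^b(p+1)), which is strictly positive. -/

import Mathlib

/-- The jump of the second-component diffusion coefficient at `h = 1`:
`σ(h,2) → D(1 + (p^b-1)/(2p^b(p-1)))` as `h → 1⁻`, and the gap
`lim_{h→1⁻} σ(h,2) - σ(max) = D(p^b-1)/(2p^b(p+1)) > 0`. -/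
theorem stmt_11 (p b D : ℝ) (hp : 2 ≤ p) (hb : 0 < b) (hD : 0 < D)
    (σ₂ : ℝ → ℝ) (σmax L : ℝ)
    (hσ₂ : ∀ h, σ₂ h = D * (1 + (p ^ b - 1) / ((p - 1) * (p ^ b + p ^ (h * b)))))
    (hσm : σmax = D * (p ^ (b + 2) - 1) / (p ^ b * (p ^ (2:ℝ) - 1)))
    (hL : L = D * (1 + (p ^ b - 1) / (2 * p ^ b * (p - 1)))) :
    Filter.Tendsto σ₂ (nhdsWithin 1 (Set.Iio 1)) (nhds L) ∧
      L - σmax = D * (p ^ b - 1) / (2 * p ^ b * (p + 1)) ∧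
      0 < D * (p ^ b - 1) / (2 * p ^ b * (p + 1)) := by
  have hp1 : (1:ℝ) < p := by linarith
  have hp0 : (0:ℝ) < p := by linarith
  have hpb1 : (1:ℝ) < p ^ b := (Real.one_lt_rpow_iff_of_pos hp0).2 (Or.inl ⟨hp1, hb⟩)
  have hpb0 : (0:ℝ) < p ^ b := by linarith
  refine ⟨?_, ?_, ?_⟩
  · have hrw : ∀ h : ℝ, p ^ (h * b) = Real.exp (Real.log p * (h * b)) := fun h =>
      Real.rpow_def_of_pos hp0 _
    have hcont : Continuous fun h : ℝ =>
        D * (1 + (p ^ b - 1) / ((p - 1) * (p ^ b + Real.exp (Real.log p * (h * b))))) := by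
      have hden : ∀ h : ℝ, (p - 1) * (p ^ b + Real.exp (Real.log p * (h * b))) ≠ 0 := by
        intro h
        have a1 : (0:ℝ) < Real.exp (Real.log p * (h * b)) := Real.exp_pos _
        have a2 : (0:ℝ) < p - 1 := by linarith
        positivity
      have hc2 : Continuous fun h : ℝ =>
          (p - 1) * (p ^ b + Real.exp (Real.log p * (h * b))) := by
        apply continuous_const.mul
        apply continuous_const.add
        exact Real.continuous_exp.comp (continuous_const.mul
          (continuous_id.mul continuous_const))
      exact continuous_const.mul (continuous_const.add (continuous_const.div hc2 hden))
    have heq : (fun h : ℝ =>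
        D * (1 + (p ^ b - 1) / ((p - 1) * (p ^ b + Real.exp (Real.log p * (h * b)))))) = σ₂ := by
      funext h; rw [hσ₂, hrw]
    have hLval : L = D * (1 + (p ^ b - 1) /
        ((p - 1) * (p ^ b + Real.exp (Real.log p * ((1:ℝ) * b))))) := by
      rw [hL, ← hrw, one_mul]; ring
    rw [← heq, hLval]
    exact (hcont.tendsto 1).mono_left nhdsWithin_le_nhds
  · have h2 : p ^ (2:ℝ) = p * p := by rw [Real.rpow_two]; ring
    have h1 : p ^ (b + 2 : ℝ) = p ^ b * (p * p) := by
      rw [Real.rpow_add hp0, h2]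
    rw [hσm, hL, h1, h2]
    have d1 : p - 1 ≠ 0 := by linarith
    have d2 : p + 1 ≠ 0 := by linarith
    have d3 : p ^ b ≠ 0 := hpb0.ne'
    have d4 : p * p - 1 ≠ 0 := by nlinarith
    have d5 : p ^ 2 - 1 ≠ 0 := by nlinarith
    field_simp
    ring
  · have : (0:ℝ) < p ^ b - 1 := by linarith
    positivity
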